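/- Let r = 0.8 and c = 1/(8^r - 6^r). If w, x, y, z are nonnegative reals with w ≤ min{x, y, z}, then c·x^r + y^r + z^r ≥ c·(w + x + y + z)^r. -/

import Mathlib

open Real in
/-- Increments of the concave function `t ↦ t ^ r` are decreasing in the base point. -/
lemma inc_lemma5 {r : ℝ} (hr0 : 0 < r) (hr1 : r ≤ 1) {a b s : ℝ}
    (hb : 0 ≤ b) (hba : b ≤ a) (hs : 0 ≤ s) :
    (a + s) ^ r + b ^ r ≤ a ^ r + (b + s) ^ r := by
  have ha : 0 ≤ a := le_trans hb hba
  rcases eq_or_lt_of_le (by linarith : b ≤ a + s) with h | h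
  · have h1 : a = b := by linarith
    have h2 : s = 0 := by linarith
    simp [h1, h2]
  · set d : ℝ := a + s - b with hd
    have hd0 : 0 < d := by simp [hd]; linarith
    set t : ℝ := s / d with ht
    have ht0 : 0 ≤ t := div_nonneg hs hd0.le
    have ht1 : t ≤ 1 := by
      rw [ht, div_le_one hd0]; linarith
    have key := (Real.concaveOn_rpow hr0.le hr1).2 (Set.mem_Ici.2 hb)
      (Set.mem_Ici.2 (by linarith : (0:ℝ) ≤ a + s))
    have k1 := key (a := 1 - t) (b := t) (by linarith) ht0 (by ring)
    have k2 := key (a := t) (b := 1 - t) ht0 (by linarith) (by ring)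
    have htd : t * d = s := by rw [ht]; exact div_mul_cancel₀ s hd0.ne'
    have e1 : (1 - t) • b + t • (a + s) = b + s := by
      simp only [smul_eq_mul]; linear_combination htd - t * hd
    have e2 : t • b + (1 - t) • (a + s) = a := by
      simp only [smul_eq_mul]; linear_combination t * hd - htd
    rw [e1] at k1
    rw [e2] at k2
    simp only [smul_eq_mul] at k1 k2
    linarith

lemma rpow45_le5 {a q : ℝ} (ha : 0 ≤ a) (hq : 0 ≤ q) (h : a ^ (4:ℕ) ≤ q ^ (5:ℕ)) :
    a ^ (0.8 : ℝ) ≤ q := by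
  have h5 : (a ^ (0.8:ℝ)) ^ (5:ℕ) = a ^ (4:ℕ) := by
    rw [← Real.rpow_natCast (a ^ (0.8:ℝ)) 5, ← Real.rpow_mul ha]
    rw [← Real.rpow_natCast a 4]; congr 1; norm_num
  have : (a ^ (0.8:ℝ)) ^ (5:ℕ) ≤ q ^ (5:ℕ) := by rw [h5]; exact h
  exact le_of_pow_le_pow_left₀ (by norm_num) hq this

lemma le_rpow45_5 {a q : ℝ} (ha : 0 ≤ a) (h : q ^ (5:ℕ) ≤ a ^ (4:ℕ)) :
    q ≤ a ^ (0.8 : ℝ) := by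
  have h5 : (a ^ (0.8:ℝ)) ^ (5:ℕ) = a ^ (4:ℕ) := by
    rw [← Real.rpow_natCast (a ^ (0.8:ℝ)) 5, ← Real.rpow_mul ha]
    rw [← Real.rpow_natCast a 4]; congr 1; norm_num
  have hpos : 0 ≤ a ^ (0.8:ℝ) := Real.rpow_nonneg ha _
  have : q ^ (5:ℕ) ≤ (a ^ (0.8:ℝ)) ^ (5:ℕ) := by rw [h5]; exact h
  exact le_of_pow_le_pow_left₀ (by norm_num) hpos this

theorem stmt_5 (r c : ℝ) (hr : r = 0.8)
    (hc : c = 1 / ((8 : ℝ) ^ r - (6 : ℝ) ^ r))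
    (w x y z : ℝ)
    (hw0 : 0 ≤ w) (hx0 : 0 ≤ x) (hy0 : 0 ≤ y) (hz0 : 0 ≤ z)
    (hw : w ≤ min x (min y z)) :
    c * x ^ r + y ^ r + z ^ r ≥ c * (w + x + y + z) ^ r := by
  subst hr
  set m : ℝ := min x (min y z) with hm
  have hmx : m ≤ x := min_le_left _ _
  have hmy : m ≤ y := le_trans (min_le_right _ _) (min_le_left _ _)
  have hmz : m ≤ z := le_trans (min_le_right _ _) (min_le_right _ _)
  have hm0 : 0 ≤ m := le_min hx0 (le_min hy0 hz0)
  clear_value m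
  -- numeric bounds
  have h8 : (5.277:ℝ) ≤ (8:ℝ) ^ (0.8:ℝ) := le_rpow45_5 (by norm_num) (by norm_num)
  have h6 : (6:ℝ) ^ (0.8:ℝ) ≤ 4.194 := rpow45_le5 (by norm_num) (by norm_num) (by norm_num)
  have h60 : (0:ℝ) ≤ (6:ℝ) ^ (0.8:ℝ) := Real.rpow_nonneg (by norm_num) _
  have h4 : (4:ℝ) ^ (0.8:ℝ) ≤ 3.04 := rpow45_le5 (by norm_num) (by norm_num) (by norm_num)
  set D : ℝ := (8:ℝ) ^ (0.8:ℝ) - (6:ℝ) ^ (0.8:ℝ) with hD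
  clear_value D
  have hD1 : (1:ℝ) ≤ D := by rw [hD]; linarith
  have hD0 : (0:ℝ) < D := by linarith
  have hc0 : 0 < c := by rw [hc]; positivity
  have hc1 : c ≤ 1 := by
    rw [hc]
    rw [div_le_one hD0]
    exact hD1
  have hcD : c * D = 1 := by
    rw [hc]; field_simp
  -- key numeric inequality : c * (4^0.8 - 3) ≤ 2 * (1 - c)
  have h41 : (4:ℝ) ^ (0.8:ℝ) - 1 ≤ 2 * D := by rw [hD]; linarith
  have hkey : c * (4:ℝ) ^ (0.8:ℝ) - 3 * c ≤ 2 - 2 * c := by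
    have h1 := mul_le_mul_of_nonneg_left h41 hc0.le
    have h2D : c * (2 * D) = 2 := by linear_combination 2 * hcD
    linarith
  -- monotonicity in w
  have step0 : (w + x + y + z) ^ (0.8:ℝ) ≤ (m + x + y + z) ^ (0.8:ℝ) :=
    Real.rpow_le_rpow (by linarith) (by linarith) (by norm_num)
  -- increment chain
  have hr0 : (0:ℝ) < 0.8 := by norm_num
  have hr1 : (0.8:ℝ) ≤ 1 := by norm_num
  have i1 : (m + x + y + z) ^ (0.8:ℝ) + m ^ (0.8:ℝ) ≤
      (2*m + y + z) ^ (0.8:ℝ) + x ^ (0.8:ℝ) := by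
    have h := inc_lemma5 hr0 hr1 (a := 2*m + y + z) (b := m) (s := x - m)
      hm0 (by linarith) (by linarith)
    have e1 : 2*m + y + z + (x - m) = m + x + y + z := by ring
    have e2 : m + (x - m) = x := by ring
    rwa [e1, e2] at h
  have i2 : (2*m + y + z) ^ (0.8:ℝ) + m ^ (0.8:ℝ) ≤
      (3*m + z) ^ (0.8:ℝ) + y ^ (0.8:ℝ) := by
    have h := inc_lemma5 hr0 hr1 (a := 3*m + z) (b := m) (s := y - m)
      hm0 (by linarith) (by linarith)
    have e1 : 3*m + z + (y - m) = 2*m + y + z := by ring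
    have e2 : m + (y - m) = y := by ring
    rwa [e1, e2] at h
  have i3 : (3*m + z) ^ (0.8:ℝ) + m ^ (0.8:ℝ) ≤
      (4*m) ^ (0.8:ℝ) + z ^ (0.8:ℝ) := by
    have h := inc_lemma5 hr0 hr1 (a := 4*m) (b := m) (s := z - m)
      hm0 (by linarith) (by linarith)
    have e1 : 4*m + (z - m) = 3*m + z := by ring
    have e2 : m + (z - m) = z := by ring
    rwa [e1, e2] at h
  have h4m : (4*m) ^ (0.8:ℝ) = (4:ℝ) ^ (0.8:ℝ) * m ^ (0.8:ℝ) :=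
    Real.mul_rpow (by norm_num) hm0
  have big : (m + x + y + z) ^ (0.8:ℝ) ≤
      (4:ℝ) ^ (0.8:ℝ) * m ^ (0.8:ℝ) + x ^ (0.8:ℝ) + y ^ (0.8:ℝ) + z ^ (0.8:ℝ)
        - 3 * m ^ (0.8:ℝ) := by
    rw [← h4m]; linarith
  -- monotone rpow comparisons
  have hmy' : m ^ (0.8:ℝ) ≤ y ^ (0.8:ℝ) := Real.rpow_le_rpow hm0 hmy (by norm_num)
  have hmz' : m ^ (0.8:ℝ) ≤ z ^ (0.8:ℝ) := Real.rpow_le_rpow hm0 hmz (by norm_num)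
  have hm08 : 0 ≤ m ^ (0.8:ℝ) := Real.rpow_nonneg hm0 _
  -- final assembly
  have p1 := mul_le_mul_of_nonneg_left step0 hc0.le
  have p2 := mul_le_mul_of_nonneg_left big hc0.le
  have p3 := mul_le_mul_of_nonneg_right hkey hm08
  have p4 : (1 - c) * m ^ (0.8:ℝ) ≤ (1 - c) * y ^ (0.8:ℝ) :=
    mul_le_mul_of_nonneg_left hmy' (by linarith)
  have p5 : (1 - c) * m ^ (0.8:ℝ) ≤ (1 - c) * z ^ (0.8:ℝ) :=
    mul_le_mul_of_nonneg_left hmz' (by linarith)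
  linarith [p1, p2, p3, p4, p5]
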